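/- Fix a real number m > 0 and a natural number i ≥ 1. For t > 0, let \(f_t(x) = 2x\,e^{-4tx^2}\). Then the (2i−1)-th derivative of \(f_t\) with respect to x, evaluated at x = m, is \(O(t^{i-1})\) as \(t \to 0^+\). -/

import Mathlib

open Asymptotics

/-- Coefficients in the expansion of the `n`-th derivative of `2x e^{-4tx²}`:
`iteratedDeriv n f_t x = ∑_p cc n p * t^p * x^(2p+1-n) * e^{-4tx²}`. -/
noncomputable def cc : ℕ → ℕ → ℝ
  | 0, p => if p = 0 then 2 else 0
  | n+1, p => ((2*p+1-n : ℕ) : ℝ) * cc n p - 8 * (if p = 0 then 0 else cc n (p-1))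

lemma cc_eq_zero_low : ∀ n p : ℕ, 2*p+1 < n → cc n p = 0 := by
  intro n
  induction n with
  | zero => intro p h; omega
  | succ n ih =>
    intro p h
    have h1 : (2*p+1-n : ℕ) = 0 ∨ 2*p+1 < n := by omega
    simp only [cc]
    rcases Nat.eq_zero_or_pos p with hp | hp
    · subst hp
      rcases h1 with h1 | h1
      · simp [h1]
      · rw [ih 0 h1]; simp
    · rw [if_neg (by omega), ih (p-1) (by omega)]
      rcases h1 with h1 | h1
      · simp [h1]
      · rw [ih p h1]; ring

lemma cc_eq_zero_high : ∀ n p : ℕ, n < p → cc n p = 0 := by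
  intro n
  induction n with
  | zero =>
    intro p h
    simp only [cc]
    rw [if_neg (by omega)]
  | succ n ih =>
    intro p h
    simp only [cc]
    rw [if_neg (by omega), ih p (by omega), ih (p-1) (by omega)]
    ring

lemma hasDerivAt_term (a b : ℝ) (q : ℕ) (x : ℝ) :
    HasDerivAt (fun x : ℝ => a * x^q * Real.exp (b * x^2))
      (a * ((q : ℝ) * x^(q-1)) * Real.exp (b*x^2)
        + a * x^q * (Real.exp (b*x^2) * (b*(2*x)))) x := by
  have h1 : HasDerivAt (fun x : ℝ => a * x^q) (a * ((q : ℝ) * x^(q-1))) x :=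
    (hasDerivAt_pow q x).const_mul a
  have h2 : HasDerivAt (fun x : ℝ => b * x^2) (b * (2*x)) x := by
    have := (hasDerivAt_pow 2 x).const_mul b
    simpa using this
  have h3 : HasDerivAt (fun x : ℝ => Real.exp (b * x^2))
      (Real.exp (b*x^2) * (b*(2*x))) x := h2.exp
  exact h1.mul h3

lemma formula (n : ℕ) (t : ℝ) (x : ℝ) :
    iteratedDeriv n (fun x : ℝ => 2*x*Real.exp (-4*t*x^2)) x
      = ∑ p ∈ Finset.range (n+1),
          cc n p * t^p * x^(2*p+1-n) * Real.exp (-4*t*x^2) := by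
  induction n generalizing x with
  | zero =>
    simp [iteratedDeriv_zero, cc, Finset.sum_range_one]
  | succ n ih =>
    rw [iteratedDeriv_succ]
    have hfe : iteratedDeriv n (fun x : ℝ => 2*x*Real.exp (-4*t*x^2))
        = fun x => ∑ p ∈ Finset.range (n+1),
            cc n p * t^p * x^(2*p+1-n) * Real.exp (-4*t*x^2) := funext ih
    rw [hfe]
    have hderiv : deriv (fun x => ∑ p ∈ Finset.range (n+1),
        cc n p * t^p * x^(2*p+1-n) * Real.exp (-4*t*x^2)) x
        = ∑ p ∈ Finset.range (n+1),
            (cc n p * t^p * (((2*p+1-n : ℕ) : ℝ) * x^((2*p+1-n)-1)) * Real.exp (-4*t*x^2)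
              + cc n p * t^p * x^(2*p+1-n) * (Real.exp (-4*t*x^2) * ((-4*t)*(2*x)))) := by
      rw [deriv_fun_sum (fun p _ =>
        (hasDerivAt_term (cc n p * t^p) (-4*t) (2*p+1-n) x).differentiableAt)]
      refine Finset.sum_congr rfl fun p _ => ?_
      exact (hasDerivAt_term (cc n p * t^p) (-4*t) (2*p+1-n) x).deriv
    rw [hderiv, Finset.sum_add_distrib]
    have hsplit : ∀ p : ℕ,
        cc (n+1) p * t^p * x^(2*p+1-(n+1)) * Real.exp (-4*t*x^2)
        = ((2*p+1-n : ℕ) : ℝ) * cc n p * t^p * x^(2*p+1-(n+1)) * Real.exp (-4*t*x^2)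
          + (-8) * (if p = 0 then (0:ℝ) else cc n (p-1)) * t^p * x^(2*p+1-(n+1))
              * Real.exp (-4*t*x^2) := by
      intro p
      simp only [cc]
      ring
    rw [Finset.sum_congr rfl (fun p _ => hsplit p), Finset.sum_add_distrib]
    congr 1
    · -- first sums
      conv_rhs => rw [Finset.sum_range_succ]
      rw [cc_eq_zero_high n (n+1) (by omega)]
      simp only [mul_zero, zero_mul, add_zero]
      refine Finset.sum_congr rfl fun p _ => ?_
      have he : 2*p+1-(n+1) = (2*p+1-n) - 1 := by omega
      rw [he]
      ring
    · -- second sums: reindex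
      rw [Finset.sum_range_succ' (fun p => (-8 * if p = 0 then (0:ℝ) else cc n (p-1))
        * t^p * x^(2*p+1-(n+1)) * Real.exp (-4*t*x^2)) (n+1)]
      simp only [if_pos rfl, if_true, mul_zero, zero_mul, add_zero]
      apply Finset.sum_congr rfl
      intro p hp
      rw [if_neg (Nat.succ_ne_zero p), Nat.add_sub_cancel]
      by_cases hc : n ≤ 2*p+1
      · have he : 2*(p+1)+1-(n+1) = (2*p+1-n) + 1 := by omega
        rw [he]
        ring
      · rw [cc_eq_zero_low n p (by omega)]
        ring

/-- For fixed `m > 0` and `i ≥ 1`, the `(2i-1)`-th `x`-derivative of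
`f_t(x) = 2x e^{-4tx²}` at `x = m` is `O(t^{i-1})` as `t → 0⁺`. -/
theorem iteratedDeriv_gaussian_isBigO (m : ℝ) (hm : 0 < m) (i : ℕ) (hi : 1 ≤ i) :
    (fun t : ℝ =>
        iteratedDeriv (2 * i - 1) (fun x : ℝ => 2 * x * Real.exp (-4 * t * x ^ 2)) m)
      =O[nhdsWithin 0 (Set.Ioi 0)] fun t : ℝ => t ^ (i - 1) := by
  set n := 2 * i - 1 with hn
  set C : ℝ := ∑ p ∈ Finset.range (n+1), |cc n p| * m^(2*p+1-n) with hC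
  rw [isBigO_iff]
  refine ⟨C, ?_⟩
  have hmem : Set.Ioo (0:ℝ) 1 ∈ nhdsWithin (0:ℝ) (Set.Ioi 0) :=
    Ioo_mem_nhdsGT_of_mem ⟨le_refl _, by norm_num⟩
  filter_upwards [hmem] with t ht
  obtain ⟨ht0, ht1⟩ := ht
  rw [formula n t m]
  have hbound : ∀ p ∈ Finset.range (n+1),
      |cc n p * t^p * m^(2*p+1-n) * Real.exp (-4*t*m^2)|
        ≤ (|cc n p| * m^(2*p+1-n)) * t^(i-1) := by
    intro p hp
    rw [abs_mul, abs_mul, abs_mul, abs_of_nonneg (pow_nonneg ht0.le _),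
        abs_of_nonneg (pow_nonneg hm.le _), abs_of_nonneg (Real.exp_pos _).le]
    by_cases hz : cc n p = 0
    · rw [hz, abs_zero]
      simp only [zero_mul]
      positivity
    · have hip : i - 1 ≤ p := by
        by_contra hcon
        exact hz (cc_eq_zero_low n p (by omega))
      have htp : t^p ≤ t^(i-1) := pow_le_pow_of_le_one ht0.le ht1.le hip
      have hexp : Real.exp (-4*t*m^2) ≤ 1 := by
        rw [Real.exp_le_one_iff]
        nlinarith
      calc |cc n p| * t^p * m^(2*p+1-n) * Real.exp (-4*t*m^2)
          ≤ |cc n p| * t^(i-1) * m^(2*p+1-n) * 1 := by gcongr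
        _ = (|cc n p| * m^(2*p+1-n)) * t^(i-1) := by ring
  calc ‖∑ p ∈ Finset.range (n+1),
        cc n p * t^p * m^(2*p+1-n) * Real.exp (-4*t*m^2)‖
      ≤ ∑ p ∈ Finset.range (n+1),
          |cc n p * t^p * m^(2*p+1-n) * Real.exp (-4*t*m^2)| := by
        rw [Real.norm_eq_abs]; exact Finset.abs_sum_le_sum_abs _ _
    _ ≤ ∑ p ∈ Finset.range (n+1), (|cc n p| * m^(2*p+1-n)) * t^(i-1) :=
        Finset.sum_le_sum hbound
    _ = C * t^(i-1) := by rw [hC, Finset.sum_mul]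
    _ ≤ C * ‖t^(i-1)‖ := by
        rw [Real.norm_eq_abs, abs_of_nonneg (by positivity)]
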